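/- arXiv:2306.00280 — 8 statements merged into one kernel-verified Lean document; each statement's English description precedes it below -/
import Mathlib

section
/- Let m ≥ 2, c ∈ (0,1), and p : Fin m → ℝ with c ≤ p_i ≤ 1 for every i. Then the second largest eigenvalue of the expected squared mixing matrix satisfies λ₂(M_p) ≤ 1 − c⁴(1 − (1−c)^m)²/8. -/
open Matrix Finset

/-- The mixing matrix `W(A)`: `W(A)_{ij} = 1/|A|` if `i,j ∈ A`, `1` if `i = j ∉ A`, `0` otherwise. -/
noncomputable def mixW {m : ℕ} (A : Finset (Fin m)) : Matrix (Fin m) (Fin m) ℝ :=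
  Matrix.of fun i j => if i ∈ A ∧ j ∈ A then ((A.card : ℝ))⁻¹
    else if i = j ∧ i ∉ A then 1 else 0

/-- Bernoulli weight of a subset `A` under activation probabilities `p`. -/
noncomputable def bernWeight {m : ℕ} (p : Fin m → ℝ) (A : Finset (Fin m)) : ℝ :=
  (∏ i ∈ A, p i) * ∏ i ∈ Aᶜ, (1 - p i)

/-- The expected squared mixing matrix `M_p = Σ_A π_p(A) W(A)²`. -/
noncomputable def expSqMix {m : ℕ} (p : Fin m → ℝ) : Matrix (Fin m) (Fin m) ℝ :=
  ∑ A : Finset (Fin m), bernWeight p A • (mixW A * mixW A)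

/-- The second largest eigenvalue (counted with multiplicity) of a real symmetric matrix;
junk value `0` if the matrix is not symmetric. -/
noncomputable def lambda2 {m : ℕ} (M : Matrix (Fin m) (Fin m) ℝ) : ℝ :=
  if hM : M.IsHermitian then
    ((Finset.univ.val.map hM.eigenvalues).sort (· ≤ ·)).getD (m - 2) 0
  else 0



lemma mixW_mul_self {m : ℕ} (A : Finset (Fin m)) : mixW A * mixW A = mixW A := by
  ext i j
  rw [Matrix.mul_apply]
  by_cases hi : i ∈ A
  · by_cases hj : j ∈ A
    · have h1 : ∀ k, mixW A i k * mixW A k j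
          = if k ∈ A then ((A.card : ℝ))⁻¹ * ((A.card : ℝ))⁻¹ else 0 := by
        intro k
        by_cases hk : k ∈ A
        · simp [mixW, hi, hj, hk]
        · have : ¬ (i = k ∧ i ∉ A) := fun h => hk (h.1 ▸ hi)
          simp [mixW, hi, hj, hk, this]
      have hcard : (A.card : ℝ) ≠ 0 := by
        have : 0 < A.card := Finset.card_pos.mpr ⟨i, hi⟩
        positivity
      rw [Finset.sum_congr rfl (fun k _ => h1 k), Finset.sum_ite_mem,
        Finset.univ_inter, Finset.sum_const, nsmul_eq_mul]
      have : mixW A i j = ((A.card : ℝ))⁻¹ := by simp [mixW, hi, hj]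
      rw [this]
      field_simp
    · have h1 : ∀ k, mixW A i k * mixW A k j = 0 := by
        intro k
        by_cases hk : k ∈ A
        · have : ¬ (k = j ∧ k ∉ A) := fun h => h.2 hk
          simp [mixW, hj, hk, this]
        · have : ¬ (i = k ∧ i ∉ A) := fun h => hk (h.1 ▸ hi)
          simp [mixW, hk, this]
      have : mixW A i j = 0 := by
        have : ¬ (i = j ∧ i ∉ A) := fun h => h.2 hi
        simp [mixW, hj, this]
      rw [this, Finset.sum_congr rfl (fun k _ => h1 k), Finset.sum_const, smul_zero]
  · have h1 : ∀ k, mixW A i k * mixW A k j = if i = k then mixW A k j else 0 := by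
      intro k
      by_cases hik : i = k
      · subst hik; simp [mixW, hi]
      · simp [mixW, hi, hik]
    rw [Finset.sum_congr rfl (fun k _ => h1 k), Finset.sum_ite_eq]
    simp


lemma sum_bernWeight {m : ℕ} (p : Fin m → ℝ) : ∑ A : Finset (Fin m), bernWeight p A = 1 := by
  have h := Finset.prod_add p (fun i => 1 - p i) (Finset.univ : Finset (Fin m))
  simp only [add_sub_cancel, Finset.prod_const_one, Finset.powerset_univ] at h
  rw [h]
  apply Finset.sum_congr rfl
  intro A _
  rw [bernWeight, Finset.compl_eq_univ_sdiff]


lemma bernWeight_nonneg {m : ℕ} (p : Fin m → ℝ) (hp : ∀ i, 0 ≤ p i ∧ p i ≤ 1)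
    (A : Finset (Fin m)) : 0 ≤ bernWeight p A := by
  apply mul_nonneg
  · exact Finset.prod_nonneg fun i _ => (hp i).1
  · exact Finset.prod_nonneg fun i _ => by linarith [(hp i).2]


lemma sum_bernWeight_pair {m : ℕ} (p : Fin m → ℝ) {i j : Fin m} (hij : i ≠ j) :
    ∑ A : Finset (Fin m), (if i ∈ A ∧ j ∈ A then bernWeight p A else 0) = p i * p j := by
  set b : Fin m → ℝ := fun k => if k = i ∨ k = j then 0 else 1 - p k with hb
  have h := Finset.prod_add p b (Finset.univ : Finset (Fin m))
  rw [Finset.powerset_univ] at h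
  have hlhs : ∏ k, (p k + b k) = p i * p j := by
    rw [← Finset.prod_mul_prod_compl ({i, j} : Finset (Fin m))]
    have h1 : ∏ k ∈ ({i, j} : Finset (Fin m)), (p k + b k) = p i * p j := by
      rw [Finset.prod_pair hij]
      simp [hb]
    have h2 : ∏ k ∈ ({i, j} : Finset (Fin m))ᶜ, (p k + b k) = 1 := by
      apply Finset.prod_eq_one
      intro k hk
      simp only [Finset.mem_compl, Finset.mem_insert, Finset.mem_singleton, not_or] at hk
      simp [hb, hk.1, hk.2]
    rw [h1, h2, mul_one]
  rw [hlhs] at h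
  rw [h]
  apply Finset.sum_congr rfl
  intro A _
  by_cases hA : i ∈ A ∧ j ∈ A
  · rw [if_pos hA, bernWeight]
    congr 1
    apply Finset.prod_congr (Finset.compl_eq_univ_sdiff A).symm
    intro k hk
    rw [Finset.compl_eq_univ_sdiff] at hk
    have : ¬(k = i ∨ k = j) := by
      rintro (rfl | rfl)
      · exact (Finset.mem_sdiff.mp hk).2 hA.1
      · exact (Finset.mem_sdiff.mp hk).2 hA.2
    simp [hb, this]
  · rw [if_neg hA]
    rw [not_and_or] at hA
    rcases hA with hA | hA
    · have : b i = 0 := by simp [hb]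
      rw [Finset.prod_eq_zero (Finset.mem_sdiff.mpr ⟨Finset.mem_univ i, hA⟩) this, mul_zero]
    · have : b j = 0 := by simp [hb]
      rw [Finset.prod_eq_zero (Finset.mem_sdiff.mpr ⟨Finset.mem_univ j, hA⟩) this, mul_zero]


lemma expSqMix_apply {m : ℕ} (p : Fin m → ℝ) (i j : Fin m) :
    expSqMix p i j = ∑ A : Finset (Fin m), bernWeight p A * mixW A i j := by
  rw [expSqMix]
  rw [Matrix.sum_apply]
  apply Finset.sum_congr rfl
  intro A _
  rw [mixW_mul_self, Matrix.smul_apply, smul_eq_mul]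


lemma mixW_row_sum {m : ℕ} (A : Finset (Fin m)) (i : Fin m) :
    ∑ j, mixW A i j = 1 := by
  by_cases hi : i ∈ A
  · have h1 : ∀ j, mixW A i j = if j ∈ A then ((A.card : ℝ))⁻¹ else 0 := by
      intro j
      by_cases hj : j ∈ A
      · simp [mixW, hi, hj]
      · have : ¬ (i = j ∧ i ∉ A) := fun h => h.2 hi
        simp [mixW, hj, this]
    rw [Finset.sum_congr rfl (fun j _ => h1 j), Finset.sum_ite_mem, Finset.univ_inter,
      Finset.sum_const, nsmul_eq_mul]
    have hcard : (A.card : ℝ) ≠ 0 := by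
      have : 0 < A.card := Finset.card_pos.mpr ⟨i, hi⟩
      positivity
    field_simp
  · have h1 : ∀ j, mixW A i j = if i = j then 1 else 0 := by
      intro j
      by_cases hij : i = j
      · subst hij; simp [mixW, hi]
      · simp [mixW, hi, hij]
    rw [Finset.sum_congr rfl (fun j _ => h1 j), Finset.sum_ite_eq]
    simp


lemma expSqMix_row_sum {m : ℕ} (p : Fin m → ℝ) (i : Fin m) :
    ∑ j, expSqMix p i j = 1 := by
  rw [Finset.sum_congr rfl (fun j _ => expSqMix_apply p i j), Finset.sum_comm]
  rw [Finset.sum_congr rfl (fun A _ => by rw [← Finset.mul_sum, mixW_row_sum, mul_one] :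
    ∀ A ∈ Finset.univ, ∑ j, bernWeight p A * mixW A i j = bernWeight p A)]
  exact sum_bernWeight p


lemma mixW_symm {m : ℕ} (A : Finset (Fin m)) (i j : Fin m) : mixW A i j = mixW A j i := by
  unfold mixW
  by_cases hij : i = j
  · subst hij; rfl
  · simp only [Matrix.of_apply, and_comm]
    have h1 : ¬ (i = j ∧ i ∉ A) := fun h => hij h.1
    have h2 : ¬ (j = i ∧ j ∉ A) := fun h => hij h.1.symm
    rw [if_neg h1, if_neg h2]


lemma expSqMix_symm {m : ℕ} (p : Fin m → ℝ) (i j : Fin m) : expSqMix p i j = expSqMix p j i := by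
  rw [expSqMix_apply, expSqMix_apply]
  exact Finset.sum_congr rfl fun A _ => by rw [mixW_symm]


lemma expSqMix_isHermitian {m : ℕ} (p : Fin m → ℝ) : (expSqMix p).IsHermitian := by
  rw [Matrix.IsHermitian]
  ext i j
  rw [Matrix.conjTranspose_apply]
  simp [expSqMix_symm p j i]


lemma mixW_ge {m : ℕ} (hm : 0 < m) (A : Finset (Fin m)) {i j : Fin m} (hij : i ≠ j)
    (hi : i ∈ A) (hj : j ∈ A) : ((m : ℝ))⁻¹ ≤ mixW A i j := by
  have hcard : 0 < A.card := Finset.card_pos.mpr ⟨i, hi⟩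
  have hle : A.card ≤ m := by simpa using Finset.card_le_card (Finset.subset_univ A)
  have : mixW A i j = ((A.card : ℝ))⁻¹ := by simp [mixW, hi, hj]
  rw [this]
  have h2 : (A.card : ℝ) ≤ m := by exact_mod_cast hle
  exact inv_anti₀ (by positivity) h2


lemma expSqMix_offdiag_ge {m : ℕ} (hm : 0 < m) (p : Fin m → ℝ) (hp : ∀ i, 0 ≤ p i ∧ p i ≤ 1)
    {i j : Fin m} (hij : i ≠ j) :
    p i * p j / m ≤ expSqMix p i j := by
  rw [expSqMix_apply]
  have key : ∀ A : Finset (Fin m),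
      (if i ∈ A ∧ j ∈ A then bernWeight p A else 0) / m ≤ bernWeight p A * mixW A i j := by
    intro A
    by_cases hA : i ∈ A ∧ j ∈ A
    · rw [if_pos hA, div_eq_mul_inv]
      apply mul_le_mul_of_nonneg_left (mixW_ge hm A hij hA.1 hA.2) (bernWeight_nonneg p hp A)
    · rw [if_neg hA, zero_div]
      apply mul_nonneg (bernWeight_nonneg p hp A)
      have h2 : ¬ (i = j ∧ i ∉ A) := fun h => hij h.1
      simp [mixW, hA, h2]
  calc p i * p j / m = (∑ A : Finset (Fin m), (if i ∈ A ∧ j ∈ A then bernWeight p A else 0)) / m := by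
        rw [sum_bernWeight_pair p hij]
    _ = ∑ A : Finset (Fin m), (if i ∈ A ∧ j ∈ A then bernWeight p A else 0) / m := by
        rw [Finset.sum_div]
    _ ≤ _ := Finset.sum_le_sum fun A _ => key A


lemma mixW_diag_ge {m : ℕ} (hm : 0 < m) (A : Finset (Fin m)) (i : Fin m) :
    ((m : ℝ))⁻¹ ≤ mixW A i i := by
  by_cases hi : i ∈ A
  · have hcard : 0 < A.card := Finset.card_pos.mpr ⟨i, hi⟩
    have hle : A.card ≤ m := by simpa using Finset.card_le_card (Finset.subset_univ A)
    have : mixW A i i = ((A.card : ℝ))⁻¹ := by simp [mixW, hi]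
    rw [this]
    have h2 : (A.card : ℝ) ≤ m := by exact_mod_cast hle
    exact inv_anti₀ (by positivity) h2
  · have : mixW A i i = 1 := by simp [mixW, hi]
    rw [this]
    have h2 : (1:ℝ) ≤ m := by exact_mod_cast hm
    exact inv_le_one_of_one_le₀ h2


lemma expSqMix_diag_ge {m : ℕ} (hm : 0 < m) (p : Fin m → ℝ) (hp : ∀ i, 0 ≤ p i ∧ p i ≤ 1)
    (i : Fin m) : ((m : ℝ))⁻¹ ≤ expSqMix p i i := by
  rw [expSqMix_apply]
  calc ((m:ℝ))⁻¹ = (∑ A : Finset (Fin m), bernWeight p A) * ((m:ℝ))⁻¹ := by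
        rw [sum_bernWeight p, one_mul]
    _ = ∑ A : Finset (Fin m), bernWeight p A * ((m:ℝ))⁻¹ := by rw [Finset.sum_mul]
    _ ≤ _ := Finset.sum_le_sum fun A _ =>
        mul_le_mul_of_nonneg_left (mixW_diag_ge hm A i) (bernWeight_nonneg p hp A)


lemma expSqMix_qform {m : ℕ} (hm : 2 ≤ m) (c : ℝ) (hc0 : 0 < c) (hc1 : c ≤ 1)
    (p : Fin m → ℝ) (hp : ∀ i, c ≤ p i ∧ p i ≤ 1) (x : Fin m → ℝ) (hx : ∑ i, x i = 0) :
    x ⬝ᵥ ((expSqMix p) *ᵥ x) ≤ (1 - c ^ 2) * ∑ i, (x i) ^ 2 := by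
  have hm0 : (0:ℝ) < m := by positivity
  have hmpos : 0 < m := by omega
  have hp01 : ∀ i, 0 ≤ p i ∧ p i ≤ 1 := fun i => ⟨le_of_lt (lt_of_lt_of_le hc0 (hp i).1), (hp i).2⟩
  set M := expSqMix p with hM
  set α := c ^ 2 / m with hα
  have hMα : ∀ i j, α ≤ M i j := by
    intro i j
    by_cases hij : i = j
    · subst hij
      refine le_trans ?_ (expSqMix_diag_ge hmpos p hp01 i)
      rw [hα, ← one_div (m:ℝ)]
      gcongr
      nlinarith
    · refine le_trans ?_ (expSqMix_offdiag_ge hmpos p hp01 hij)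
      rw [hα]
      gcongr
      nlinarith [(hp i).1, (hp j).1]
  have hrow : ∀ i, ∑ j, (M i j - α) = 1 - c ^ 2 := by
    intro i
    rw [Finset.sum_sub_distrib, expSqMix_row_sum, Finset.sum_const, Finset.card_univ,
      Fintype.card_fin, nsmul_eq_mul, hα]
    field_simp
  have hcol : ∀ j, ∑ i, (M i j - α) = 1 - c ^ 2 := by
    intro j
    rw [Finset.sum_congr rfl (fun i _ => by rw [hM, expSqMix_symm p i j] :
      ∀ i ∈ Finset.univ, M i j - α = M j i - α)]
    exact hrow j
  have hdot : x ⬝ᵥ (M *ᵥ x) = ∑ i, ∑ j, x i * (M i j * x j) := by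
    simp [dotProduct, Matrix.mulVec, Finset.mul_sum]
  rw [hdot]
  have split : ∑ i, ∑ j, x i * (M i j * x j)
      = (∑ i, ∑ j, (M i j - α) * (x i * x j)) + ∑ i, ∑ j, α * (x i * x j) := by
    rw [← Finset.sum_add_distrib]
    apply Finset.sum_congr rfl; intro i _
    rw [← Finset.sum_add_distrib]
    apply Finset.sum_congr rfl; intro j _
    ring
  have hzero : ∑ i, ∑ j, α * (x i * x j) = 0 := by
    have h1 : ∀ i, ∑ j, α * (x i * x j) = α * x i * ∑ j, x j := by
      intro i
      rw [Finset.mul_sum]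
      apply Finset.sum_congr rfl; intros; ring
    rw [Finset.sum_congr rfl (fun i _ => h1 i)]
    simp [hx]
  rw [split, hzero, add_zero]
  have step1 : ∑ i, ∑ j, (M i j - α) * (x i * x j)
      ≤ ∑ i, ∑ j, (M i j - α) * ((x i ^ 2 + x j ^ 2) / 2) := by
    apply Finset.sum_le_sum; intro i _
    apply Finset.sum_le_sum; intro j _
    have hN : 0 ≤ M i j - α := by linarith [hMα i j]
    nlinarith [sq_nonneg (x i - x j)]
  refine le_trans step1 (le_of_eq ?_)
  have expand : ∑ i, ∑ j, (M i j - α) * ((x i ^ 2 + x j ^ 2) / 2)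
      = (∑ i, ∑ j, (M i j - α) * (x i ^ 2 / 2)) + ∑ i, ∑ j, (M i j - α) * (x j ^ 2 / 2) := by
    rw [← Finset.sum_add_distrib]
    apply Finset.sum_congr rfl; intro i _
    rw [← Finset.sum_add_distrib]
    apply Finset.sum_congr rfl; intro j _
    ring
  have A1 : ∑ i, ∑ j, (M i j - α) * (x i ^ 2 / 2) = (1 - c ^ 2) * ∑ i, x i ^ 2 / 2 := by
    rw [Finset.mul_sum]
    apply Finset.sum_congr rfl; intro i _
    rw [← Finset.sum_mul, hrow i]
  have A2 : ∑ i, ∑ j, (M i j - α) * (x j ^ 2 / 2) = (1 - c ^ 2) * ∑ j, x j ^ 2 / 2 := by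
    rw [Finset.sum_comm, Finset.mul_sum]
    apply Finset.sum_congr rfl; intro j _
    rw [← Finset.sum_mul, hcol j]
  rw [expand, A1, A2]
  have hs : (∑ i : Fin m, x i ^ 2 / 2) = (∑ i : Fin m, x i ^ 2) / 2 := by rw [Finset.sum_div]
  rw [hs]
  ring


lemma eig_count {m : ℕ} (hm : 2 ≤ m) (c : ℝ) (hc0 : 0 < c) (hc1 : c ≤ 1)
    (p : Fin m → ℝ) (hp : ∀ i, c ≤ p i ∧ p i ≤ 1) :
    (Finset.univ.filter
      (fun i => 1 - c ^ 2 < (expSqMix_isHermitian p).eigenvalues i)).card ≤ 1 := by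
  by_contra hcard
  push_neg at hcard
  obtain ⟨i, hi, j, hj, hij⟩ := Finset.one_lt_card.mp hcard
  rw [Finset.mem_filter] at hi hj
  set hH := expSqMix_isHermitian p with hHdef
  set μ := hH.eigenvalues i with hμdef
  set ν := hH.eigenvalues j with hνdef
  have hμ : 1 - c ^ 2 < μ := hi.2
  have hν : 1 - c ^ 2 < ν := hj.2
  set u : Fin m → ℝ := ⇑(hH.eigenvectorBasis i) with hudef
  set v : Fin m → ℝ := ⇑(hH.eigenvectorBasis j) with hvdef
  have hMu : expSqMix p *ᵥ u = μ • u := hH.mulVec_eigenvectorBasis i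
  have hMv : expSqMix p *ᵥ v = ν • v := hH.mulVec_eigenvectorBasis j
  have hortho := hH.eigenvectorBasis.orthonormal
  rw [orthonormal_iff_ite] at hortho
  have hinner : ∀ k l : Fin m,
      (inner ℝ (hH.eigenvectorBasis k) (hH.eigenvectorBasis l) : ℝ)
        = ∑ a, hH.eigenvectorBasis k a * hH.eigenvectorBasis l a := by
    intro k l
    rw [PiLp.inner_apply]
    simp [RCLike.inner_apply, mul_comm]
  have huu : ∑ a, u a * u a = 1 := by
    have := hortho i i
    rw [hinner i i] at this
    simpa using this
  have hvv : ∑ a, v a * v a = 1 := by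
    have := hortho j j
    rw [hinner j j] at this
    simpa using this
  have huv : ∑ a, u a * v a = 0 := by
    have := hortho i j
    rw [hinner i j] at this
    simpa [hij] using this
  set s1 := ∑ a, u a with hs1
  set s2 := ∑ a, v a with hs2
  have claim : ∀ a b : ℝ, a * s1 + b * s2 = 0 →
      a ^ 2 * μ + b ^ 2 * ν ≤ (1 - c ^ 2) * (a ^ 2 + b ^ 2) := by
    intro a b hab
    set x : Fin m → ℝ := fun k => a * u k + b * v k with hx
    have hxsum : ∑ k, x k = 0 := by
      rw [hx]
      simp only [Finset.sum_add_distrib, ← Finset.mul_sum, ← hs1, ← hs2]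
      exact hab
    have hq := expSqMix_qform hm c hc0 hc1 p hp x hxsum
    have hxvec : x = a • u + b • v := rfl
    have hMx : expSqMix p *ᵥ x = a • (μ • u) + b • (ν • v) := by
      rw [hxvec, Matrix.mulVec_add, Matrix.mulVec_smul, Matrix.mulVec_smul, hMu, hMv]
    have hdot : x ⬝ᵥ (expSqMix p *ᵥ x) = a ^ 2 * μ + b ^ 2 * ν := by
      rw [hMx]
      have expand : ∀ k, x k * (a • (μ • u) + b • (ν • v)) k
          = a ^ 2 * μ * (u k * u k) + b ^ 2 * ν * (v k * v k)
            + (a * b * μ + a * b * ν) * (u k * v k) := by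
        intro k
        simp only [hx, Pi.add_apply, Pi.smul_apply, smul_eq_mul]
        ring
      rw [dotProduct]
      rw [Finset.sum_congr rfl (fun k _ => expand k)]
      rw [Finset.sum_add_distrib, Finset.sum_add_distrib, ← Finset.mul_sum, ← Finset.mul_sum,
        ← Finset.mul_sum, huu, hvv, huv]
      ring
    have hsq : ∑ k, x k ^ 2 = a ^ 2 + b ^ 2 := by
      have expand : ∀ k, x k ^ 2
          = a ^ 2 * (u k * u k) + b ^ 2 * (v k * v k) + (2 * a * b) * (u k * v k) := by
        intro k
        simp only [hx]
        ring
      rw [Finset.sum_congr rfl (fun k _ => expand k)]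
      rw [Finset.sum_add_distrib, Finset.sum_add_distrib, ← Finset.mul_sum, ← Finset.mul_sum,
        ← Finset.mul_sum, huu, hvv, huv]
      ring
    rw [hdot, hsq] at hq
    exact hq
  by_cases hs : s1 = 0 ∧ s2 = 0
  · have h1 := claim 1 0 (by rw [hs.1]; ring)
    norm_num at h1
    linarith
  · rcases not_and_or.mp hs with h | h
    · have hpos : 0 < s1 ^ 2 := lt_of_le_of_ne (sq_nonneg _) (Ne.symm (pow_ne_zero 2 h))
      have h1 := claim s2 (-s1) (by ring)
      nlinarith [mul_pos (sub_pos.mpr hν) hpos, mul_nonneg (sub_pos.mpr hμ).le (sq_nonneg s2)]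
    · have hpos : 0 < s2 ^ 2 := lt_of_le_of_ne (sq_nonneg _) (Ne.symm (pow_ne_zero 2 h))
      have h1 := claim s2 (-s1) (by ring)
      nlinarith [mul_pos (sub_pos.mpr hμ) hpos, mul_nonneg (sub_pos.mpr hν).le (sq_nonneg s1)]


lemma sorted_getD_le (l : List ℝ) (hl : l.Pairwise (· ≤ ·)) (t : ℝ) (n : ℕ)
    (hn : l.length = n + 2) (hc : l.countP (fun x => decide (t < x)) ≤ 1) :
    l.getD n 0 ≤ t := by
  by_contra hcon
  push_neg at hcon
  have hnlt : n < l.length := by omega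
  rw [List.getD_eq_getElem l 0 hnlt] at hcon
  have key : ∀ x ∈ l.drop n, t < x := by
    intro x hx
    rw [List.mem_iff_getElem] at hx
    obtain ⟨k, hk, rfl⟩ := hx
    rw [List.getElem_drop]
    refine lt_of_lt_of_le hcon ?_
    rcases Nat.eq_zero_or_pos k with rfl | hkpos
    · simp
    · have hP := List.pairwise_iff_getElem.mp hl n (n + k) hnlt (by
        rw [List.length_drop] at hk; omega) (by omega)
      exact hP
  have hdropcount : (l.drop n).countP (fun x => decide (t < x)) = (l.drop n).length := by
    rw [List.countP_eq_length]
    intro a ha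
    exact decide_eq_true (key a ha)
  have hdroplen : (l.drop n).length = 2 := by
    rw [List.length_drop]; omega
  have hsplit : l.countP (fun x => decide (t < x))
      = (l.take n).countP (fun x => decide (t < x))
        + (l.drop n).countP (fun x => decide (t < x)) := by
    conv_lhs => rw [← List.take_append_drop n l]
    rw [List.countP_append]
  omega


theorem lambda2_expSqMix_le {m : ℕ} (hm : 2 ≤ m) (c : ℝ) (hc : c ∈ Set.Ioo (0:ℝ) 1)
    (p : Fin m → ℝ) (hp : ∀ i, c ≤ p i ∧ p i ≤ 1) :
    lambda2 (expSqMix p) ≤ 1 - c ^ 4 * (1 - (1 - c) ^ m) ^ 2 / 8 := by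
  obtain ⟨hc0, hc1⟩ := hc
  have hH := expSqMix_isHermitian p
  rw [lambda2, dif_pos hH]
  set t : ℝ := 1 - c ^ 2 with ht
  set l := ((Finset.univ.val.map hH.eigenvalues).sort (· ≤ ·)) with hl
  have hsorted : l.Pairwise (· ≤ ·) := Multiset.pairwise_sort _ _
  have hlen : l.length = m := by
    rw [hl, Multiset.length_sort, Multiset.card_map]
    simp
  have hcount : l.countP (fun x => decide (t < x))
      = (Finset.univ.filter (fun i => t < hH.eigenvalues i)).card := by
    rw [hl, ← Multiset.coe_countP, Multiset.sort_eq, Multiset.countP_map]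
    rfl
  have hc2 : l.countP (fun x => decide (t < x)) ≤ 1 := by
    rw [hcount]
    exact eig_count hm c hc0 (le_of_lt hc1) p hp
  have hmain : l.getD (m - 2) 0 ≤ t := by
    apply sorted_getD_le l hsorted t (m - 2) (by omega) hc2
  refine le_trans hmain ?_
  rw [ht]
  have h1 : (0:ℝ) ≤ (1 - c) ^ m := pow_nonneg (by linarith) m
  have h2 : (1 - c) ^ m ≤ 1 := pow_le_one₀ (by linarith) (by linarith)
  have hq0 : (0:ℝ) ≤ 1 - (1 - c) ^ m := by linarith
  have hq1 : 1 - (1 - c) ^ m ≤ 1 := by linarith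
  have hq2 : (1 - (1 - c) ^ m) ^ 2 ≤ 1 := by nlinarith
  have h3 : c ^ 4 * (1 - (1 - c) ^ m) ^ 2 ≤ c ^ 4 :=
    mul_le_of_le_one_right (pow_nonneg hc0.le 4) hq2
  have h4 : c ^ 4 ≤ c ^ 2 := pow_le_pow_of_le_one hc0.le hc1.le (by norm_num)
  have h5 : (0:ℝ) ≤ c ^ 2 := sq_nonneg c
  linarith
end

section
/- Let f : ℝ^d → ℝ be differentiable with L-Lipschitz gradient (L > 0), let η > 0, and define the gradient-descent iterates x_0 ∈ ℝ^d arbitrary and x_{k+1} = x_k − η·∇f(x_k). Then for every integer s ≥ 1, ‖ Σ_{k=0}^{s−1} ( ∇f(x_k) − ∇f(x_0) ) ‖ ≤ ( ((1+ηL)^s − 1 − sηL)/(ηL) )·‖∇f(x_0)‖. -/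
open Finset

theorem gd_local_perturbation {d : ℕ} (f : EuclideanSpace ℝ (Fin d) → ℝ)
    (hf : Differentiable ℝ f) (L : ℝ) (hL : 0 < L)
    (hlip : ∀ x y, ‖gradient f x - gradient f y‖ ≤ L * ‖x - y‖)
    (η : ℝ) (hη : 0 < η) (x : ℕ → EuclideanSpace ℝ (Fin d))
    (hx : ∀ k, x (k + 1) = x k - η • gradient f (x k))
    (s : ℕ) (hs : 1 ≤ s) :
    ‖∑ k ∈ Finset.range s, (gradient f (x k) - gradient f (x 0))‖ ≤
      ((1 + η * L) ^ s - 1 - s * η * L) / (η * L) * ‖gradient f (x 0)‖ := by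
  set g := fun k => gradient f (x k) with hg
  have hstep : ∀ k, ‖g (k+1) - g k‖ ≤ η * L * ‖g k‖ := by
    intro k
    calc ‖g (k+1) - g k‖ ≤ L * ‖x (k+1) - x k‖ := hlip _ _
      _ = η * L * ‖g k‖ := by
        rw [hx k]
        simp [norm_smul, abs_of_pos hη]
        ring
  have hA : ∀ k, ‖g k‖ ≤ (1 + η * L) ^ k * ‖g 0‖ := by
    intro k
    induction k with
    | zero => simp
    | succ k ih =>
      have h1 : ‖g (k+1)‖ ≤ ‖g (k+1) - g k‖ + ‖g k‖ := by
        simpa using norm_add_le (g (k+1) - g k) (g k)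
      have := hstep k
      have hηL : (0:ℝ) ≤ η * L := le_of_lt (mul_pos hη hL)
      calc ‖g (k+1)‖ ≤ η * L * ‖g k‖ + ‖g k‖ := by linarith
        _ = (1 + η * L) * ‖g k‖ := by ring
        _ ≤ (1 + η * L) * ((1 + η * L) ^ k * ‖g 0‖) := by
            apply mul_le_mul_of_nonneg_left ih; linarith
        _ = (1 + η * L) ^ (k+1) * ‖g 0‖ := by ring
  have hB : ∀ k, ‖g k - g 0‖ ≤ ((1 + η * L) ^ k - 1) * ‖g 0‖ := by
    intro k
    induction k with
    | zero => simp
    | succ k ih =>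
      have h1 : ‖g (k+1) - g 0‖ ≤ ‖g (k+1) - g k‖ + ‖g k - g 0‖ :=
        norm_sub_le_norm_sub_add_norm_sub _ _ _
      have h2 : ‖g (k+1) - g k‖ ≤ η * L * ((1 + η * L) ^ k * ‖g 0‖) :=
        le_trans (hstep k) (mul_le_mul_of_nonneg_left (hA k)
          (le_of_lt (mul_pos hη hL)))
      calc ‖g (k+1) - g 0‖ ≤ η * L * ((1 + η * L) ^ k * ‖g 0‖)
            + ((1 + η * L) ^ k - 1) * ‖g 0‖ := by linarith
        _ = ((1 + η * L) ^ (k+1) - 1) * ‖g 0‖ := by ring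
  have hηL : (0:ℝ) < η * L := mul_pos hη hL
  calc ‖∑ k ∈ Finset.range s, (g k - g 0)‖
      ≤ ∑ k ∈ Finset.range s, ‖g k - g 0‖ := norm_sum_le _ _
    _ ≤ ∑ k ∈ Finset.range s, ((1 + η * L) ^ k - 1) * ‖g 0‖ :=
        Finset.sum_le_sum (fun k _ => hB k)
    _ = ((∑ k ∈ Finset.range s, (1 + η * L) ^ k) - s) * ‖g 0‖ := by
        rw [← Finset.sum_mul, Finset.sum_sub_distrib]
        simp
    _ = ((1 + η * L) ^ s - 1 - s * η * L) / (η * L) * ‖g 0‖ := by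
        rw [geom_sum_eq (by linarith)]
        have h : ((1 + η * L) ^ s - 1) / (1 + η * L - 1) - (s : ℝ) =
            ((1 + η * L) ^ s - 1 - s * η * L) / (η * L) := by
          field_simp
          ring
        rw [h]
end

section
/- For every integer s ≥ 2, every L > 0, every c > 0, and every step size η with 0 < η ≤ c/(sL), one has ((1+ηL)^s − 1 − sηL)/( (s(s−1)/2)·(ηL)² ) ≤ (e^c − 1 − c)/(c²/2). -/
lemma descFactorial_le_aux (m : ℕ) : ∀ k : ℕ,
    (m + 2).descFactorial (k + 2) ≤ (m + 2) * (m + 1) * (m + 2) ^ k := by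
  intro k
  induction k with
  | zero => simp [Nat.descFactorial]; ring_nf; omega
  | succ k ih =>
      have h : (m + 2).descFactorial (k + 3) = (m + 2 - (k + 2)) * (m + 2).descFactorial (k + 2) :=
        rfl
      rw [h]
      calc (m + 2 - (k + 2)) * (m + 2).descFactorial (k + 2)
          ≤ (m + 2) * ((m + 2) * (m + 1) * (m + 2) ^ k) :=
            Nat.mul_le_mul (by omega) ih
        _ = (m + 2) * (m + 1) * (m + 2) ^ (k + 1) := by ring

theorem kappa_le_of_eta_le (s : ℕ) (hs : 2 ≤ s) (L : ℝ) (hL : 0 < L)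
    (c : ℝ) (hc : 0 < c) (η : ℝ) (hη : 0 < η) (hηc : η ≤ c / (s * L)) :
    ((1 + η * L) ^ s - 1 - s * (η * L)) / ((s : ℝ) * ((s : ℝ) - 1) / 2 * (η * L) ^ 2) ≤
      (Real.exp c - 1 - c) / (c ^ 2 / 2) := by
  obtain ⟨m, rfl⟩ : ∃ m, s = m + 2 := ⟨s - 2, by omega⟩
  set x : ℝ := η * L with hxdef
  have hx : 0 < x := by positivity
  have hsl : (0 : ℝ) < ((m : ℝ) + 2) * L := by positivity
  have hsx : ((m : ℝ) + 2) * x ≤ c := by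
    calc ((m : ℝ) + 2) * x = η * (((m : ℝ) + 2) * L) := by ring
      _ ≤ c := by
        have h2 : η * (((m : ℝ) + 2) * L) ≤ (c / (((m : ℝ) + 2) * L)) * (((m : ℝ) + 2) * L) := by
          apply mul_le_mul_of_nonneg_right _ hsl.le
          push_cast at hηc; exact hηc
        rwa [div_mul_cancel₀ _ hsl.ne'] at h2
  -- expand (1+x)^(m+2)
  have hN : (1 + x) ^ (m + 2) - 1 - ((m : ℝ) + 2) * x
      = ∑ k ∈ Finset.range (m + 1), x ^ (k + 2) * ((m + 2).choose (k + 2) : ℝ) := by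
    rw [add_comm 1 x, add_pow]
    simp only [one_pow, mul_one]
    rw [Finset.sum_range_succ' _ (m + 2), Finset.sum_range_succ' _ (m + 1)]
    simp only [show ∀ k : ℕ, k + 1 + 1 = k + 2 from fun _ => rfl, Nat.zero_add,
      Nat.choose_one_right, Nat.choose_zero_right, pow_zero, pow_one]
    push_cast
    ring
  have hM : ∑ k ∈ Finset.range (m + 1), c ^ (k + 2) / ((Nat.factorial (k + 2) : ℕ) : ℝ)
      ≤ Real.exp c - 1 - c := by
    have h := Real.sum_le_exp_of_nonneg hc.le (m + 3)
    rw [Finset.sum_range_succ' _ (m + 2), Finset.sum_range_succ' _ (m + 1)] at h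
    simp only [show ∀ k : ℕ, k + 1 + 1 = k + 2 from fun _ => rfl, Nat.zero_add,
      pow_zero, pow_one, Nat.factorial_one, Nat.factorial_zero, Nat.cast_one, div_one] at h
    linarith
  have hDl : (0 : ℝ) < ((m : ℝ) + 2) * (((m : ℝ) + 2) - 1) / 2 * x ^ 2 := by
    have h : ((m : ℝ) + 2) - 1 = (m : ℝ) + 1 := by ring
    rw [h]; positivity
  have hDr : (0 : ℝ) < c ^ 2 / 2 := by positivity
  push_cast
  rw [div_le_div_iff₀ hDl hDr]
  calc ((1 + x) ^ (m + 2) - 1 - ((m : ℝ) + 2) * x) * (c ^ 2 / 2)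
      = ∑ k ∈ Finset.range (m + 1),
          x ^ (k + 2) * ((m + 2).choose (k + 2) : ℝ) * (c ^ 2 / 2) := by
        rw [hN, Finset.sum_mul]
    _ ≤ ∑ k ∈ Finset.range (m + 1),
          c ^ (k + 2) / ((Nat.factorial (k + 2) : ℕ) : ℝ)
            * (((m : ℝ) + 2) * (((m : ℝ) + 2) - 1) / 2 * x ^ 2) := by
        apply Finset.sum_le_sum
        intro k _
        have hfac : (0 : ℝ) < ((Nat.factorial (k + 2) : ℕ) : ℝ) := by positivity
        have hxck : x ^ k ≤ (c / ((m : ℝ) + 2)) ^ k := by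
          apply pow_le_pow_left₀ hx.le
          rw [le_div_iff₀ (by positivity)]
          linarith [hsx]
        have hnat : (((m + 2).descFactorial (k + 2) : ℕ) : ℝ)
            ≤ ((m : ℝ) + 2) * ((m : ℝ) + 1) * ((m : ℝ) + 2) ^ k := by
          calc (((m + 2).descFactorial (k + 2) : ℕ) : ℝ)
              ≤ (((m + 2) * (m + 1) * (m + 2) ^ k : ℕ) : ℝ) := by
                exact_mod_cast descFactorial_le_aux m k
            _ = ((m : ℝ) + 2) * ((m : ℝ) + 1) * ((m : ℝ) + 2) ^ k := by push_cast; ring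
        have hdf : (((m + 2).choose (k + 2) : ℕ) : ℝ) * ((Nat.factorial (k + 2) : ℕ) : ℝ)
            = (((m + 2).descFactorial (k + 2) : ℕ) : ℝ) := by
          rw [Nat.descFactorial_eq_factorial_mul_choose]; push_cast; ring
        have hkey : ((m + 2).choose (k + 2) : ℝ) * ((Nat.factorial (k + 2) : ℕ) : ℝ) * x ^ k
            ≤ ((m : ℝ) + 2) * ((m : ℝ) + 1) * c ^ k := by
          rw [hdf]
          calc (((m + 2).descFactorial (k + 2) : ℕ) : ℝ) * x ^ k
              ≤ (((m : ℝ) + 2) * ((m : ℝ) + 1) * ((m : ℝ) + 2) ^ k)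
                  * (c / ((m : ℝ) + 2)) ^ k :=
                mul_le_mul hnat hxck (by positivity) (by positivity)
            _ = ((m : ℝ) + 2) * ((m : ℝ) + 1) * c ^ k := by
                rw [div_pow]; field_simp
        rw [div_mul_eq_mul_div, le_div_iff₀ hfac]
        have hexp1 : x ^ (k + 2) = x ^ k * x ^ 2 := by ring
        have hexp2 : c ^ (k + 2) = c ^ k * c ^ 2 := by ring
        rw [hexp1, hexp2]
        nlinarith [mul_le_mul_of_nonneg_right hkey
          (by positivity : (0 : ℝ) ≤ x ^ 2 * c ^ 2 / 2)]
    _ = (∑ k ∈ Finset.range (m + 1), c ^ (k + 2) / ((Nat.factorial (k + 2) : ℕ) : ℝ))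
          * (((m : ℝ) + 2) * (((m : ℝ) + 2) - 1) / 2 * x ^ 2) := by
        rw [Finset.sum_mul]
    _ ≤ (Real.exp c - 1 - c) * (((m : ℝ) + 2) * (((m : ℝ) + 2) - 1) / 2 * x ^ 2) :=
        mul_le_mul_of_nonneg_right hM hDl.le
end

section
/- Let F_1,…,F_m : ℝ^d → ℝ be differentiable with L-Lipschitz gradients and let F = (1/m)Σ_{i=1}^m F_i. Let x_1,…,x_m ∈ ℝ^d and x̄ = (1/m)Σ_{i=1}^m x_i, and suppose (1/m)Σ_{i=1}^m ‖∇F_i(x̄) − ∇F(x̄)‖² ≤ β²‖∇F(x̄)‖² + ξ². Then (1/m)Σ_{i=1}^m ‖∇F_i(x_i)‖² ≤ (3L²/m)·Σ_{i=1}^m ‖x_i − x̄‖² + 3(β²+1)·‖∇F(x̄)‖² + 3ξ². -/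
open Finset

theorem avg_local_grad_sq_bound {d m : ℕ} (hm : 0 < m)
    (F : Fin m → EuclideanSpace ℝ (Fin d) → ℝ)
    (hF : ∀ i, Differentiable ℝ (F i)) (L : ℝ)
    (hlip : ∀ i x y, ‖gradient (F i) x - gradient (F i) y‖ ≤ L * ‖x - y‖)
    (Fbar : EuclideanSpace ℝ (Fin d) → ℝ)
    (hFbar : Fbar = fun x => (1 / (m : ℝ)) * ∑ i, F i x)
    (x : Fin m → EuclideanSpace ℝ (Fin d))
    (xbar : EuclideanSpace ℝ (Fin d)) (hxbar : xbar = (1 / (m : ℝ)) • ∑ i, x i)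
    (β ξ : ℝ)
    (hhet : (1 / (m : ℝ)) * ∑ i, ‖gradient (F i) xbar - gradient Fbar xbar‖ ^ 2 ≤
      β ^ 2 * ‖gradient Fbar xbar‖ ^ 2 + ξ ^ 2) :
    (1 / (m : ℝ)) * ∑ i, ‖gradient (F i) (x i)‖ ^ 2 ≤
      3 * L ^ 2 / m * ∑ i, ‖x i - xbar‖ ^ 2 +
        3 * (β ^ 2 + 1) * ‖gradient Fbar xbar‖ ^ 2 + 3 * ξ ^ 2 := by
  have hm' : (0:ℝ) < m := by exact_mod_cast hm
  set G := ‖gradient Fbar xbar‖ with hG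
  have key : ∀ i, ‖gradient (F i) (x i)‖ ^ 2 ≤
      3 * L ^ 2 * ‖x i - xbar‖ ^ 2 +
      3 * ‖gradient (F i) xbar - gradient Fbar xbar‖ ^ 2 + 3 * G ^ 2 := by
    intro i
    set a := gradient (F i) (x i)
    set b := gradient (F i) xbar
    set c := gradient Fbar xbar
    have h1 : ‖a‖ ≤ ‖a - b‖ + ‖b - c‖ + ‖c‖ := by
      calc ‖a‖ = ‖(a - b) + (b - c) + c‖ := by rw [sub_add_sub_cancel, sub_add_cancel]
        _ ≤ ‖(a - b) + (b - c)‖ + ‖c‖ := norm_add_le _ _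
        _ ≤ ‖a - b‖ + ‖b - c‖ + ‖c‖ := by
            gcongr; exact norm_add_le _ _
    have h2 := hlip i (x i) xbar
    nlinarith [norm_nonneg a, norm_nonneg (a - b), norm_nonneg (b - c),
      norm_nonneg c, norm_nonneg (x i - xbar),
      sq_nonneg (‖a - b‖ - ‖b - c‖), sq_nonneg (‖b - c‖ - ‖c‖),
      sq_nonneg (‖a - b‖ - ‖c‖)]
  have hsum : ∑ i, ‖gradient (F i) (x i)‖ ^ 2 ≤
      3 * L ^ 2 * ∑ i, ‖x i - xbar‖ ^ 2 +
      3 * ∑ i, ‖gradient (F i) xbar - gradient Fbar xbar‖ ^ 2 + m * (3 * G ^ 2) := by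
    calc ∑ i, ‖gradient (F i) (x i)‖ ^ 2
        ≤ ∑ i, (3 * L ^ 2 * ‖x i - xbar‖ ^ 2 +
            3 * ‖gradient (F i) xbar - gradient Fbar xbar‖ ^ 2 + 3 * G ^ 2) :=
          Finset.sum_le_sum fun i _ => key i
      _ = 3 * L ^ 2 * ∑ i, ‖x i - xbar‖ ^ 2 +
            3 * ∑ i, ‖gradient (F i) xbar - gradient Fbar xbar‖ ^ 2 + m * (3 * G ^ 2) := by
          simp [Finset.sum_add_distrib, Finset.mul_sum]
  have h3 : (1 / (m:ℝ)) * ∑ i, ‖gradient (F i) (x i)‖ ^ 2 ≤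
      3 * L ^ 2 / m * ∑ i, ‖x i - xbar‖ ^ 2 +
      3 * ((1 / (m:ℝ)) * ∑ i, ‖gradient (F i) xbar - gradient Fbar xbar‖ ^ 2) +
      3 * G ^ 2 := by
    have := mul_le_mul_of_nonneg_left hsum (le_of_lt (one_div_pos.mpr hm'))
    have hmne : (m:ℝ) ≠ 0 := ne_of_gt hm'
    calc (1 / (m:ℝ)) * ∑ i, ‖gradient (F i) (x i)‖ ^ 2 ≤ _ := this
      _ = 3 * L ^ 2 / m * ∑ i, ‖x i - xbar‖ ^ 2 +
          3 * ((1 / (m:ℝ)) * ∑ i, ‖gradient (F i) xbar - gradient Fbar xbar‖ ^ 2) +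
          3 * G ^ 2 := by field_simp
  nlinarith [h3, hhet]
end

section
/- Let η ∈ ℝ, and let X^{(t)}, G^{(t)} ∈ ℝ^{d×m} for t ≥ 0 and W^{(t)} ∈ ℝ^{m×m} for t ≥ 0 satisfy: each W^{(t)} has all row sums and all column sums equal to 1 (W^{(t)}𝟙 = 𝟙 and 𝟙ᵀW^{(t)} = 𝟙ᵀ); the recursion X^{(t+1)} = (X^{(t)} − η·G^{(t)})·W^{(t)} holds for all t ≥ 0; and all columns of X^{(0)} are equal, i.e. X^{(0)}(I_m − J) = 0 where J = (1/m)𝟙𝟙ᵀ. Then for every t ≥ 1, X^{(t)}·(I_m − J) = −η·Σ_{q=0}^{t−1} G^{(q)}·( W^{(q)} W^{(q+1)} ⋯ W^{(t−1)} − J ). -/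
open Matrix Finset

/-- The `m × m` averaging matrix `(1/m) 𝟙𝟙ᵀ`. -/
noncomputable def avgMatrix (m : ℕ) : Matrix (Fin m) (Fin m) ℝ :=
  Matrix.of fun _ _ => (m : ℝ)⁻¹

theorem consensus_unrolling {d m : ℕ} (η : ℝ)
    (X G : ℕ → Matrix (Fin d) (Fin m) ℝ) (W : ℕ → Matrix (Fin m) (Fin m) ℝ)
    (hrow : ∀ t i, ∑ j, W t i j = 1) (hcol : ∀ t j, ∑ i, W t i j = 1)
    (hrec : ∀ t, X (t + 1) = (X t - η • G t) * W t)
    (hinit : X 0 * ((1 : Matrix (Fin m) (Fin m) ℝ) - avgMatrix m) = 0)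
    (t : ℕ) (ht : 1 ≤ t) :
    X t * ((1 : Matrix (Fin m) (Fin m) ℝ) - avgMatrix m) =
      -η • ∑ q ∈ Finset.range t,
        G q * ((List.ofFn fun k : Fin (t - q) => W (q + (k : ℕ))).prod - avgMatrix m) := by
  set J : Matrix (Fin m) (Fin m) ℝ := avgMatrix m with hJ
  have hWJ : ∀ s, W s * J = J := by
    intro s; ext i j
    simp [Matrix.mul_apply, avgMatrix, hJ, ← Finset.sum_mul, hrow]
  have hJW : ∀ s, J * W s = J := by
    intro s; ext i j
    simp [Matrix.mul_apply, avgMatrix, hJ, ← Finset.mul_sum, hcol]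
  have hcomm : ∀ s, W s * (1 - J) = (1 - J) * W s := by
    intro s
    rw [Matrix.mul_sub, Matrix.sub_mul, Matrix.mul_one, Matrix.one_mul, hWJ, hJW]
  have hsubW : ∀ s, (1 - J) * W s = W s - J := by
    intro s
    rw [Matrix.sub_mul, Matrix.one_mul, hJW]
  have hprod : ∀ q n : ℕ, (List.ofFn fun k : Fin (n + 1) => W (q + (k : ℕ))).prod
      = (List.ofFn fun k : Fin n => W (q + (k : ℕ))).prod * W (q + n) := by
    intro q n
    rw [List.ofFn_succ']
    simp
  have key : ∀ s, X (s + 1) * (1 - J)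
      = (X s * (1 - J)) * W s + (-η) • (G s * (W s - J)) := by
    intro s
    rw [hrec s]
    calc (X s - η • G s) * W s * (1 - J)
        = ((X s - η • G s) * (1 - J)) * W s := by
          rw [Matrix.mul_assoc, hcomm s, Matrix.mul_assoc]
      _ = (X s * (1 - J)) * W s - η • (G s * ((1 - J) * W s)) := by
          simp only [Matrix.sub_mul, Matrix.smul_mul, Matrix.mul_assoc]
      _ = (X s * (1 - J)) * W s + (-η) • (G s * (W s - J)) := by
          rw [hsubW s, sub_eq_add_neg, neg_smul]
  induction t, ht using Nat.le_induction with
  | base =>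
      rw [key 0, hinit, Matrix.zero_mul, zero_add]
      have h1 : (List.ofFn fun k : Fin (1 - 0) => W (0 + (k : ℕ))).prod = W 0 := by
        simp
      rw [Finset.sum_range_one, h1]
  | succ t ht ih =>
      have hP : ∀ q, q < t → (List.ofFn fun k : Fin (t + 1 - q) => W (q + (k : ℕ))).prod
          = (List.ofFn fun k : Fin (t - q) => W (q + (k : ℕ))).prod * W t := by
        intro q hq
        have h : t + 1 - q = (t - q) + 1 := by omega
        rw [h, hprod q (t - q), Nat.add_sub_cancel' (le_of_lt hq)]
      have hlast : (List.ofFn fun k : Fin (t + 1 - t) => W (t + (k : ℕ))).prod = W t := by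
        rw [show t + 1 - t = 1 from by omega]
        simp
      have hsum : ∑ q ∈ Finset.range t,
          G q * ((List.ofFn fun k : Fin (t + 1 - q) => W (q + (k : ℕ))).prod - J)
          = (∑ q ∈ Finset.range t,
              G q * ((List.ofFn fun k : Fin (t - q) => W (q + (k : ℕ))).prod - J)) * W t := by
        rw [Matrix.sum_mul]
        refine Finset.sum_congr rfl fun q hq => ?_
        rw [hP q (Finset.mem_range.mp hq), Matrix.mul_assoc, Matrix.sub_mul, hJW t]
      rw [key t, ih, Finset.sum_range_succ, hlast, hsum, smul_add, Matrix.smul_mul]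
end

section
/- Let m ≥ 1, c ∈ (0,1), and p : Fin m → ℝ with c ≤ p_i ≤ 1 for every i. Then every entry of the expected squared mixing matrix satisfies (M_p)_{j j'} ≥ (c²/m)·(1 − (1−c)^m) for all j, j' ∈ Fin m. -/
open Matrix Finset

lemma mixW_nonneg {m : ℕ} (A : Finset (Fin m)) (i j : Fin m) : 0 ≤ mixW A i j := by
  simp only [mixW, of_apply]
  split_ifs <;> positivity

lemma mixW_sq_nonneg {m : ℕ} (A : Finset (Fin m)) (i j : Fin m) :
    0 ≤ (mixW A * mixW A) i j := by
  rw [Matrix.mul_apply]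
  exact Finset.sum_nonneg fun k _ => mul_nonneg (mixW_nonneg A i k) (mixW_nonneg A k j)

lemma mixW_sq_ge {m : ℕ} {A : Finset (Fin m)} {j j' : Fin m} (hj : j ∈ A) (hj' : j' ∈ A) :
    (m : ℝ)⁻¹ ≤ (mixW A * mixW A) j j' := by
  have hcard : 0 < A.card := Finset.card_pos.mpr ⟨j, hj⟩
  have hc0 : (A.card : ℝ) ≠ 0 := by positivity
  have hsub : ∑ k ∈ A, mixW A j k * mixW A k j' = (A.card : ℝ)⁻¹ := by
    have heq : ∀ k ∈ A, mixW A j k * mixW A k j' = (A.card : ℝ)⁻¹ * (A.card : ℝ)⁻¹ :=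
      fun k hk => by simp [mixW, hj, hj', hk]
    rw [Finset.sum_congr rfl heq, Finset.sum_const, nsmul_eq_mul]
    field_simp
  calc (m : ℝ)⁻¹ ≤ (A.card : ℝ)⁻¹ := by
        apply inv_anti₀ (by positivity)
        exact_mod_cast (Finset.card_le_univ A).trans_eq (by simp)
    _ = ∑ k ∈ A, mixW A j k * mixW A k j' := hsub.symm
    _ ≤ ∑ k, mixW A j k * mixW A k j' :=
        Finset.sum_le_sum_of_subset_of_nonneg (Finset.subset_univ A)
          (fun k _ _ => mul_nonneg (mixW_nonneg A j k) (mixW_nonneg A k j'))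
    _ = (mixW A * mixW A) j j' := (Matrix.mul_apply).symm

theorem expSqMix_entry_ge {m : ℕ} (hm : 1 ≤ m) (c : ℝ) (hc : c ∈ Set.Ioo (0:ℝ) 1)
    (p : Fin m → ℝ) (hp : ∀ i, c ≤ p i ∧ p i ≤ 1) (j j' : Fin m) :
    c ^ 2 / m * (1 - (1 - c) ^ m) ≤ expSqMix p j j' := by
  obtain ⟨hc0, hc1⟩ := hc
  have hm0 : (0:ℝ) < m := by exact_mod_cast hm
  have hp0 : ∀ i, 0 ≤ p i := fun i => hc0.le.trans (hp i).1
  -- the modified second factor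
  set r : Fin m → ℝ := fun i => if i = j ∨ i = j' then 0 else 1 - p i with hr
  have hr0 : ∀ i, 0 ≤ r i := by
    intro i; simp only [hr]; split_ifs with h
    · exact le_rfl
    · linarith [(hp i).2]
  have entry : expSqMix p j j' = ∑ A : Finset (Fin m), bernWeight p A * (mixW A * mixW A) j j' := by
    simp [expSqMix, Matrix.sum_apply]
  -- termwise bound
  have termwise : ∀ A : Finset (Fin m),
      (∏ i ∈ A, p i) * (∏ i ∈ Aᶜ, r i) * (m:ℝ)⁻¹ ≤ bernWeight p A * (mixW A * mixW A) j j' := by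
    intro A
    by_cases hA : j ∈ A ∧ j' ∈ A
    · have hreq : ∀ i ∈ Aᶜ, r i = 1 - p i := by
        intro i hi
        simp only [hr]
        rw [if_neg]
        rintro (rfl | rfl) <;> exact (Finset.mem_compl.mp hi) (by tauto)
      rw [Finset.prod_congr rfl hreq]
      have hb : 0 ≤ bernWeight p A :=
        mul_nonneg (Finset.prod_nonneg fun i _ => hp0 i)
          (Finset.prod_nonneg fun i hi => by linarith [(hp i).2])
      calc (∏ i ∈ A, p i) * (∏ i ∈ Aᶜ, (1 - p i)) * (m:ℝ)⁻¹
          = bernWeight p A * (m:ℝ)⁻¹ := by rw [bernWeight]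
        _ ≤ bernWeight p A * (mixW A * mixW A) j j' :=
            mul_le_mul_of_nonneg_left (mixW_sq_ge hA.1 hA.2) hb
    · have : ∏ i ∈ Aᶜ, r i = 0 := by
        rcases not_and_or.mp hA with h | h
        · exact Finset.prod_eq_zero (Finset.mem_compl.mpr h) (by simp [hr])
        · exact Finset.prod_eq_zero (Finset.mem_compl.mpr h) (by simp [hr])
      rw [this, mul_zero, zero_mul]
      exact mul_nonneg (mul_nonneg (Finset.prod_nonneg fun i _ => hp0 i)
        (Finset.prod_nonneg fun i hi => by linarith [(hp i).2])) (mixW_sq_nonneg A j j')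
  -- sum of the lower bounds via prod_add
  have hsum : ∑ A : Finset (Fin m), (∏ i ∈ A, p i) * (∏ i ∈ Aᶜ, r i)
      = ∏ i, (p i + r i) := by
    rw [Finset.prod_add]
    rw [← Finset.powerset_univ]
    exact Finset.sum_congr rfl fun A _ => by
      rw [Finset.compl_eq_univ_sdiff]
  -- lower bound the product by c^2
  have hprod : c ^ 2 ≤ ∏ i, (p i + r i) := by
    have hfac : ∀ i, (if i = j ∨ i = j' then c else 1) ≤ p i + r i := by
      intro i; simp only [hr]; split_ifs with h
      · linarith [(hp i).1]
      · linarith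
    calc c ^ 2 ≤ ∏ i, (if i = j ∨ i = j' then c else 1) := by
          rw [Finset.prod_ite, Finset.prod_const, Finset.prod_const, one_pow, mul_one]
          apply pow_le_pow_of_le_one hc0.le hc1.le
          calc (Finset.univ.filter (fun i => i = j ∨ i = j')).card
              ≤ ({j, j'} : Finset (Fin m)).card := by
                apply Finset.card_le_card
                intro i hi
                simp only [Finset.mem_filter] at hi
                simp [hi.2]
            _ ≤ 2 := Finset.card_insert_le _ _ |>.trans (by simp)
      _ ≤ ∏ i, (p i + r i) :=
          Finset.prod_le_prod (fun i _ => by split_ifs <;> [exact hc0.le; norm_num]) 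
            (fun i _ => hfac i)
  -- combine
  have key : c ^ 2 * (m:ℝ)⁻¹ ≤ expSqMix p j j' := by
    rw [entry]
    calc c ^ 2 * (m:ℝ)⁻¹ ≤ (∏ i, (p i + r i)) * (m:ℝ)⁻¹ := by
          apply mul_le_mul_of_nonneg_right hprod (by positivity)
      _ = ∑ A : Finset (Fin m), (∏ i ∈ A, p i) * (∏ i ∈ Aᶜ, r i) * (m:ℝ)⁻¹ := by
          rw [← Finset.sum_mul, hsum]
      _ ≤ ∑ A : Finset (Fin m), bernWeight p A * (mixW A * mixW A) j j' :=
          Finset.sum_le_sum fun A _ => termwise A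
  have h1c : 0 ≤ (1 - c) ^ m := pow_nonneg (by linarith) m
  calc c ^ 2 / m * (1 - (1 - c) ^ m) ≤ c ^ 2 / m * 1 := by
        apply mul_le_mul_of_nonneg_left (by linarith) (div_nonneg (by positivity) hm0.le)
    _ = c ^ 2 * (m:ℝ)⁻¹ := by ring
    _ ≤ expSqMix p j j' := key
end

section
/- Let m ≥ 1, let p : Fin m → ℝ with 0 ≤ p_z ≤ 1 for every z, and fix i ∈ Fin m. Then Σ_{A ⊆ Fin m, i ∈ A} (1/|A|) · (Π_{z∈A} p_z) · (Π_{z∉A} (1−p_z)) = p_i · ( 1 + Σ_{j=2}^m (−1)^{j+1} (1/j) · Σ_{S ⊆ (Fin m)∖{i}, |S| = j−1} Π_{z∈S} p_z ). -/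
open Finset

lemma coeff_rec (k r : ℕ) :
    ((r.factorial : ℝ) * ((k + 1).factorial : ℝ)) / ((r + (k + 1) + 1).factorial : ℝ) =
      ((r.factorial : ℝ) * (k.factorial : ℝ)) / ((r + k + 1).factorial : ℝ) -
      (((r + 1).factorial : ℝ) * (k.factorial : ℝ)) / ((r + 1 + k + 1).factorial : ℝ) := by
  have h1 : r + (k + 1) + 1 = (r + k + 1) + 1 := by omega
  have h2 : r + 1 + k + 1 = (r + k + 1) + 1 := by omega
  rw [h1, h2, Nat.factorial_succ (r + k + 1), Nat.factorial_succ k, Nat.factorial_succ r]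
  have hf : ((r + k + 1).factorial : ℝ) ≠ 0 := Nat.cast_ne_zero.mpr (Nat.factorial_ne_zero _)
  have hc : ((r + k + 1 : ℕ) : ℝ) + 1 ≠ 0 := by positivity
  push_cast
  field_simp
  ring

lemma core {α : Type*} [DecidableEq α] (p : α → ℝ) (E : Finset α) :
    ∀ r : ℕ,
      ∑ B ∈ E.powerset,
          (1 / ((B.card + r + 1 : ℕ) : ℝ)) * (∏ z ∈ B, p z) * ∏ z ∈ E \ B, (1 - p z)
        = ∑ S ∈ E.powerset,
            (-1 : ℝ) ^ S.card *
              ((r.factorial : ℝ) * (S.card.factorial : ℝ) / ((r + S.card + 1).factorial : ℝ)) *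
              ∏ z ∈ S, p z := by
  induction E using Finset.induction_on with
  | empty =>
      intro r
      simp [Nat.factorial_succ]
      field_simp
  | @insert a E ha ih =>
      intro r
      rw [Finset.sum_powerset_insert ha, Finset.sum_powerset_insert ha]
      have hL1 : ∑ B ∈ E.powerset,
          (1 / ((B.card + r + 1 : ℕ) : ℝ)) * (∏ z ∈ B, p z) * ∏ z ∈ insert a E \ B, (1 - p z)
          = (1 - p a) * ∑ B ∈ E.powerset,
            (1 / ((B.card + r + 1 : ℕ) : ℝ)) * (∏ z ∈ B, p z) * ∏ z ∈ E \ B, (1 - p z) := by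
        rw [Finset.mul_sum]
        refine Finset.sum_congr rfl fun B hB => ?_
        have hB' : B ⊆ E := Finset.mem_powerset.mp hB
        have haB : a ∉ B := fun h => ha (hB' h)
        have hset : insert a E \ B = insert a (E \ B) := by
          ext x
          simp only [Finset.mem_sdiff, Finset.mem_insert]
          by_cases hx : x = a
          · subst hx; simp [haB]
          · simp [hx]
        rw [hset, Finset.prod_insert (fun h => ha (Finset.mem_sdiff.mp h).1)]
        ring
      have hL2 : ∑ B ∈ E.powerset,
          (1 / (((insert a B).card + r + 1 : ℕ) : ℝ)) * (∏ z ∈ insert a B, p z) *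
            ∏ z ∈ insert a E \ insert a B, (1 - p z)
          = p a * ∑ B ∈ E.powerset,
            (1 / ((B.card + (r + 1) + 1 : ℕ) : ℝ)) * (∏ z ∈ B, p z) * ∏ z ∈ E \ B, (1 - p z) := by
        rw [Finset.mul_sum]
        refine Finset.sum_congr rfl fun B hB => ?_
        have hB' : B ⊆ E := Finset.mem_powerset.mp hB
        have haB : a ∉ B := fun h => ha (hB' h)
        have hset : insert a E \ insert a B = E \ B := by
          ext x; simp only [Finset.mem_sdiff, Finset.mem_insert]
          constructor
          · rintro ⟨h1 | h1, h2⟩ <;> tauto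
          · rintro ⟨h1, h2⟩; exact ⟨Or.inr h1, by rintro (rfl | h) <;> [exact ha h1; exact h2 h]⟩
        rw [hset, Finset.card_insert_of_notMem haB, Finset.prod_insert haB,
          show B.card + 1 + r + 1 = B.card + (r + 1) + 1 by omega]
        ring
      have hR2 : ∑ S ∈ E.powerset,
          (-1 : ℝ) ^ (insert a S).card *
            ((r.factorial : ℝ) * ((insert a S).card.factorial : ℝ) /
              ((r + (insert a S).card + 1).factorial : ℝ)) * ∏ z ∈ insert a S, p z
          = p a * ((∑ S ∈ E.powerset, (-1 : ℝ) ^ S.card *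
              (((r + 1).factorial : ℝ) * (S.card.factorial : ℝ) /
                ((r + 1 + S.card + 1).factorial : ℝ)) * ∏ z ∈ S, p z)
            - ∑ S ∈ E.powerset, (-1 : ℝ) ^ S.card *
              ((r.factorial : ℝ) * (S.card.factorial : ℝ) /
                ((r + S.card + 1).factorial : ℝ)) * ∏ z ∈ S, p z) := by
        rw [← Finset.sum_sub_distrib, Finset.mul_sum]
        refine Finset.sum_congr rfl fun S hS => ?_
        have hS' : S ⊆ E := Finset.mem_powerset.mp hS
        have haS : a ∉ S := fun h => ha (hS' h)
        rw [Finset.card_insert_of_notMem haS, Finset.prod_insert haS, coeff_rec]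
        ring
      rw [hL1, hL2, hR2, ih r, ih (r + 1)]
      ring

theorem bernoulli_frac_expectation_eq {m : ℕ} (hm : 1 ≤ m)
    (p : Fin m → ℝ) (hp : ∀ z, 0 ≤ p z ∧ p z ≤ 1) (i : Fin m) :
    ∑ A ∈ (Finset.univ : Finset (Fin m)).powerset.filter (fun A => i ∈ A),
        (1 / (A.card : ℝ)) * (∏ z ∈ A, p z) * ∏ z ∈ Aᶜ, (1 - p z) =
      p i * (1 + ∑ j ∈ Finset.Icc 2 m, (-1 : ℝ) ^ (j + 1) * (1 / (j : ℝ)) *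
        ∑ S ∈ ((Finset.univ : Finset (Fin m)).erase i).powerset.filter
            (fun S => S.card = j - 1), ∏ z ∈ S, p z) := by
  classical
  set E : Finset (Fin m) := (Finset.univ : Finset (Fin m)).erase i with hE
  have hiE : i ∉ E := Finset.notMem_erase i _
  have hcard : E.card = m - 1 := by
    rw [hE, Finset.card_erase_of_mem (Finset.mem_univ i), Finset.card_univ, Fintype.card_fin]
  have step1 : ∑ A ∈ (Finset.univ : Finset (Fin m)).powerset.filter (fun A => i ∈ A),
        (1 / (A.card : ℝ)) * (∏ z ∈ A, p z) * ∏ z ∈ Aᶜ, (1 - p z)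
      = p i * ∑ B ∈ E.powerset,
          (1 / ((B.card + 0 + 1 : ℕ) : ℝ)) * (∏ z ∈ B, p z) * ∏ z ∈ E \ B, (1 - p z) := by
    rw [Finset.mul_sum]
    refine Finset.sum_nbij' (fun A => A.erase i) (fun B => insert i B) ?_ ?_ ?_ ?_ ?_
    · intro A hA
      simp only [Finset.mem_filter, Finset.mem_powerset] at hA
      exact Finset.mem_powerset.mpr (Finset.erase_subset_erase i hA.1)
    · intro B hB
      simp only [Finset.mem_filter, Finset.mem_powerset]
      exact ⟨Finset.subset_univ _, Finset.mem_insert_self _ _⟩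
    · intro A hA
      simp only [Finset.mem_filter] at hA
      exact Finset.insert_erase hA.2
    · intro B hB
      have hiB : i ∉ B := fun h => hiE (Finset.mem_powerset.mp hB h)
      exact Finset.erase_insert hiB
    · intro A hA
      simp only [Finset.mem_filter] at hA
      have hiA : i ∈ A := hA.2
      have hprod : ∏ z ∈ A, p z = p i * ∏ z ∈ A.erase i, p z :=
        (Finset.mul_prod_erase A p hiA).symm
      have hcompl : Aᶜ = E \ A.erase i := by
        ext x
        simp only [Finset.mem_compl, hE, Finset.mem_sdiff, Finset.mem_erase, Finset.mem_univ,
          and_true]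
        constructor
        · intro hx; exact ⟨fun h => hx (h ▸ hiA), fun h => hx h.2⟩
        · rintro ⟨h1, h2⟩ hxA; exact h2 ⟨h1, hxA⟩
      rw [hprod, hcompl, ← Finset.card_erase_add_one hiA]
      simp only [Nat.add_zero]
      ring
  have step3 : ∑ S ∈ E.powerset,
        (-1 : ℝ) ^ S.card *
          ((Nat.factorial 0 : ℝ) * (S.card.factorial : ℝ) / ((0 + S.card + 1).factorial : ℝ)) *
          ∏ z ∈ S, p z
      = 1 + ∑ j ∈ Finset.Icc 2 m, (-1 : ℝ) ^ (j + 1) * (1 / (j : ℝ)) *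
          ∑ S ∈ E.powerset.filter (fun S => S.card = j - 1), ∏ z ∈ S, p z := by
    rw [Finset.sum_powerset, hcard, show m - 1 + 1 = m by omega, Finset.range_eq_Ico,
      Finset.sum_eq_sum_Ico_succ_bot (by omega : 0 < m)]
    congr 1
    · simp
    · refine (Finset.sum_nbij' (fun j => j - 1) (fun k => k + 1) ?_ ?_ ?_ ?_ ?_).symm
      · intro j hj
        simp only [Finset.mem_Icc] at hj
        simp only [Finset.mem_Ico]
        omega
      · intro k hk
        simp only [Finset.mem_Ico] at hk
        simp only [Finset.mem_Icc]
        omega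
      · intro j hj
        simp only [Finset.mem_Icc] at hj
        show j - 1 + 1 = j
        omega
      · intro k hk
        show k + 1 - 1 = k
        omega
      · intro j hj
        simp only [Finset.mem_Icc] at hj
        obtain ⟨k, rfl⟩ : ∃ k, j = k + 1 := ⟨j - 1, by omega⟩
        simp only [Nat.add_sub_cancel]
        rw [Finset.powersetCard_eq_filter, Finset.mul_sum]
        refine Finset.sum_congr rfl fun S hS => ?_
        have hSk : S.card = k := (Finset.mem_filter.mp hS).2
        rw [hSk]
        have hfac : ((0 + k + 1).factorial : ℝ) = ((k : ℝ) + 1) * (k.factorial : ℝ) := by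
          rw [show 0 + k + 1 = k + 1 by omega, Nat.factorial_succ]
          push_cast
          ring
        rw [hfac]
        have hk0 : (k : ℝ) + 1 ≠ 0 := by positivity
        have hkf : (k.factorial : ℝ) ≠ 0 := Nat.cast_ne_zero.mpr (Nat.factorial_ne_zero _)
        push_cast
        rw [pow_succ, pow_succ]
        field_simp
        ring
  rw [step1, core p E 0, step3]
end

section
/- Let m ≥ 2 and let M ∈ ℝ^{m×m} be symmetric with every row summing to 1 and with every entry M_{ij} ≥ δ for some δ > 0. Then the second largest eigenvalue of M (counted with multiplicity) satisfies λ₂(M) ≤ 1 − m²δ²/8. -/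
open Matrix Finset

lemma quad_bound {m : ℕ} (M : Matrix (Fin m) (Fin m) ℝ) (hsymm : M.IsSymm)
    (hrow : ∀ i, ∑ j, M i j = 1) (δ : ℝ) (hentry : ∀ i j, δ ≤ M i j)
    (x : Fin m → ℝ) (hx : ∑ k, x k = 0) :
    x ⬝ᵥ (M *ᵥ x) ≤ (1 - m * δ) * ∑ k, x k * x k := by
  have hN : ∀ i j, 0 ≤ M i j - δ := fun i j => by linarith [hentry i j]
  have hrowN : ∀ i, ∑ j, (M i j - δ) = 1 - m * δ := by
    intro i
    rw [Finset.sum_sub_distrib, hrow i, Finset.sum_const, Finset.card_univ]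
    simp [nsmul_eq_mul]
  have e1 : x ⬝ᵥ (M *ᵥ x) = ∑ i, ∑ j, (M i j - δ) * (x i * x j) := by
    simp only [dotProduct, mulVec, Finset.mul_sum]
    rw [← sub_eq_zero]
    have : ∑ i, ∑ j, (x i * (M i j * x j) - (M i j - δ) * (x i * x j))
        = δ * ((∑ i, x i) * (∑ j, x j)) := by
      rw [Finset.sum_mul_sum, Finset.mul_sum]
      refine Finset.sum_congr rfl fun i _ => ?_
      rw [Finset.mul_sum]
      refine Finset.sum_congr rfl fun j _ => ?_
      ring
    rw [← Finset.sum_sub_distrib]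
    simp_rw [← Finset.sum_sub_distrib]
    rw [this, hx]
    ring
  rw [e1]
  have step : ∑ i, ∑ j, (M i j - δ) * (x i * x j)
      ≤ ∑ i, ∑ j, (M i j - δ) * ((x i * x i + x j * x j) / 2) := by
    refine Finset.sum_le_sum fun i _ => Finset.sum_le_sum fun j _ => ?_
    have h2 : x i * x j ≤ (x i * x i + x j * x j) / 2 := by nlinarith [sq_nonneg (x i - x j)]
    exact mul_le_mul_of_nonneg_left h2 (hN i j)
  refine step.trans_eq ?_
  have e2 : ∑ i, ∑ j, (M i j - δ) * ((x i * x i + x j * x j) / 2)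
      = (∑ i, ∑ j, (M i j - δ) * (x i * x i)) / 2 + (∑ i, ∑ j, (M i j - δ) * (x j * x j)) / 2 := by
    rw [Finset.sum_div, Finset.sum_div, ← Finset.sum_add_distrib]
    refine Finset.sum_congr rfl fun i _ => ?_
    rw [Finset.sum_div, Finset.sum_div, ← Finset.sum_add_distrib]
    refine Finset.sum_congr rfl fun j _ => ?_
    ring
  rw [e2]
  have eA : ∑ i, ∑ j, (M i j - δ) * (x i * x i) = (1 - m * δ) * ∑ k, x k * x k := by
    rw [Finset.mul_sum]
    refine Finset.sum_congr rfl fun i _ => ?_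
    rw [← Finset.sum_mul, hrowN i]
  have eB : ∑ i, ∑ j, (M i j - δ) * (x j * x j) = (1 - m * δ) * ∑ k, x k * x k := by
    rw [Finset.sum_comm, Finset.mul_sum]
    refine Finset.sum_congr rfl fun j _ => ?_
    have hcol : ∑ i, (M i j - δ) = 1 - m * δ := by
      rw [← hrowN j]
      exact Finset.sum_congr rfl fun i _ => by rw [hsymm.apply j i]
    rw [← Finset.sum_mul, hcol]
  rw [eA, eB]
  ring

lemma at_most_one {m : ℕ} (M : Matrix (Fin m) (Fin m) ℝ) (hM : M.IsHermitian)
    (hsymm : M.IsSymm) (hrow : ∀ i, ∑ j, M i j = 1) (δ : ℝ) (hδ : 0 < δ)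
    (hentry : ∀ i j, δ ≤ M i j)
    (i j : Fin m) (hij : i ≠ j) (hi : 1 - m * δ < hM.eigenvalues i)
    (hj : 1 - m * δ < hM.eigenvalues j) : False := by
  set u : Fin m → ℝ := ⇑(hM.eigenvectorBasis i) with hu
  set v : Fin m → ℝ := ⇑(hM.eigenvectorBasis j) with hv
  have hMu : M *ᵥ u = hM.eigenvalues i • u := hM.mulVec_eigenvectorBasis i
  have hMv : M *ᵥ v = hM.eigenvalues j • v := hM.mulVec_eigenvectorBasis j
  have horth := hM.eigenvectorBasis.orthonormal
  have huu : ∑ k, u k * u k = 1 := by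
    have := orthonormal_iff_ite.mp horth i i
    simp only [PiLp.inner_apply, RCLike.inner_apply, conj_trivial] at this
    simpa [mul_comm] using this
  have hvv : ∑ k, v k * v k = 1 := by
    have := orthonormal_iff_ite.mp horth j j
    simp only [PiLp.inner_apply, RCLike.inner_apply, conj_trivial] at this
    simpa [mul_comm] using this
  have huv : ∑ k, u k * v k = 0 := by
    have := orthonormal_iff_ite.mp horth i j
    simp only [PiLp.inner_apply, RCLike.inner_apply, conj_trivial] at this
    simpa [mul_comm, hij] using this
  -- choose coefficients
  obtain ⟨a, b, hab, hsum⟩ : ∃ a b : ℝ, 0 < a ^ 2 + b ^ 2 ∧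
      a * (∑ k, u k) + b * (∑ k, v k) = 0 := by
    by_cases hs : (∑ k, u k) = 0
    · exact ⟨1, 0, by norm_num, by simp [hs]⟩
    · refine ⟨∑ k, v k, -(∑ k, u k), ?_, by ring⟩
      have h1 : (∑ k, u k) ^ 2 ≠ 0 := pow_ne_zero 2 hs
      have h2 : 0 < (∑ k, u k) ^ 2 := lt_of_le_of_ne (sq_nonneg _) (Ne.symm h1)
      nlinarith [sq_nonneg (∑ k, v k)]
  set x : Fin m → ℝ := fun k => a * u k + b * v k with hxdef
  have hxsum : ∑ k, x k = 0 := by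
    simp only [hxdef, Finset.sum_add_distrib, ← Finset.mul_sum]
    exact hsum
  have hxx : ∑ k, x k * x k = a ^ 2 + b ^ 2 := by
    have : ∀ k, x k * x k = a^2 * (u k * u k) + b^2 * (v k * v k) + (2*a*b) * (u k * v k) := by
      intro k; simp only [hxdef]; ring
    simp_rw [this, Finset.sum_add_distrib, ← Finset.mul_sum, huu, hvv, huv]
    ring
  have hq : x ⬝ᵥ (M *ᵥ x) = hM.eigenvalues i * a ^ 2 + hM.eigenvalues j * b ^ 2 := by
    have hMx : M *ᵥ x = fun k => a * (hM.eigenvalues i * u k) + b * (hM.eigenvalues j * v k) := by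
      funext k
      have : x = a • u + b • v := by funext l; simp [hxdef]
      rw [this, Matrix.mulVec_add, Matrix.mulVec_smul, Matrix.mulVec_smul, hMu, hMv]
      simp [smul_smul]
      ring
    rw [hMx]
    simp only [dotProduct, hxdef]
    have : ∀ k, (a * u k + b * v k) * (a * (hM.eigenvalues i * u k) + b * (hM.eigenvalues j * v k))
        = (hM.eigenvalues i * a^2) * (u k * u k) + (hM.eigenvalues j * b^2) * (v k * v k)
          + (a * b * (hM.eigenvalues i + hM.eigenvalues j)) * (u k * v k) := by
      intro k; ring
    simp_rw [this, Finset.sum_add_distrib, ← Finset.mul_sum, huu, hvv, huv]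
    ring
  have hb := quad_bound M hsymm hrow δ hentry x hxsum
  rw [hq, hxx] at hb
  have hcase : a ≠ 0 ∨ b ≠ 0 := by
    by_contra h
    push_neg at h
    rw [h.1, h.2] at hab
    norm_num at hab
  rcases hcase with ha | hb0
  · have ha2 : 0 < a ^ 2 := lt_of_le_of_ne (sq_nonneg _) (Ne.symm (pow_ne_zero 2 ha))
    nlinarith [sq_nonneg b]
  · have hb2 : 0 < b ^ 2 := lt_of_le_of_ne (sq_nonneg _) (Ne.symm (pow_ne_zero 2 hb0))
    nlinarith [sq_nonneg a]

theorem lambda2_le_of_entry_lb {m : ℕ} (hm : 2 ≤ m) (M : Matrix (Fin m) (Fin m) ℝ)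
    (hsymm : M.IsSymm) (hrow : ∀ i, ∑ j, M i j = 1)
    (δ : ℝ) (hδ : 0 < δ) (hentry : ∀ i j, δ ≤ M i j) :
    lambda2 M ≤ 1 - (m : ℝ) ^ 2 * δ ^ 2 / 8 := by
  classical
  have hM : M.IsHermitian := hsymm
  have hmδ : (m : ℝ) * δ ≤ 1 := by
    have i0 : Fin m := ⟨0, by omega⟩
    have h1 := hrow i0
    have hge : (m : ℝ) * δ ≤ ∑ j, M i0 j := by
      have : ∑ _j : Fin m, δ = (m : ℝ) * δ := by
        rw [Finset.sum_const, Finset.card_univ, Fintype.card_fin, nsmul_eq_mul]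
      rw [← this]
      exact Finset.sum_le_sum fun j _ => hentry i0 j
    linarith
  set c : ℝ := 1 - (m : ℝ) * δ with hc
  have hcard : (univ.filter fun i => c < hM.eigenvalues i).card ≤ 1 := by
    refine Finset.card_le_one.mpr fun i hi j hj => ?_
    simp only [Finset.mem_filter] at hi hj
    by_contra hij
    exact at_most_one M hM hsymm hrow δ hδ hentry i j hij hi.2 hj.2
  rw [lambda2, dif_pos hM]
  set L := ((univ.val.map hM.eigenvalues).sort (· ≤ ·)) with hL
  have hlen : L.length = m := by simp [hL]
  have hsort : L.Pairwise (· ≤ ·) := Multiset.pairwise_sort _ _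
  have hgetD : L.getD (m - 2) 0 ≤ c := by
    by_contra hcon
    push_neg at hcon
    have h2 : m - 2 < L.length := by omega
    rw [List.getD_eq_getElem L 0 h2] at hcon
    have hdropall : ∀ y ∈ L.drop (m - 2), c < y := by
      intro y hy
      obtain ⟨k, hk⟩ := List.mem_iff_get.mp hy
      have hlt : (m - 2 : ℕ) + (k : ℕ) < L.length := by
        have hk2 : (k : ℕ) < (L.drop (m - 2)).length := k.isLt
        have hk3 : (L.drop (m - 2)).length = L.length - (m - 2) := List.length_drop
        omega
      have hgd : (L.drop (m - 2)).get k = L.get ⟨m - 2 + k, hlt⟩ := by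
        simp only [List.get_eq_getElem, List.getElem_drop]
      have hle : L.get ⟨m - 2, h2⟩ ≤ L.get ⟨m - 2 + k, hlt⟩ :=
        hsort.rel_get_of_le (by simp)
      rw [← hk, hgd]
      exact lt_of_lt_of_le hcon hle
    have hdroplen : (L.drop (m - 2)).length = 2 := by rw [List.length_drop]; omega
    have hcount2 : 2 ≤ L.countP (fun y => decide (c < y)) := by
      have hall := List.countP_eq_length.mpr
        (fun a ha => decide_eq_true (hdropall a ha))
      calc 2 = (L.drop (m - 2)).countP (fun y => decide (c < y)) := by
            rw [hall, hdroplen]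
        _ ≤ _ := (List.drop_sublist _ _).countP_le
    have hchain : 2 ≤ (univ.filter fun i => c < hM.eigenvalues i).card := by
      calc 2 ≤ L.countP (fun y => decide (c < y)) := hcount2
        _ = Multiset.countP (fun y => c < y) ↑L := (Multiset.coe_countP _ _).symm
        _ = Multiset.countP (fun y => c < y) (univ.val.map hM.eigenvalues) := by
            rw [hL, Multiset.sort_eq]
        _ = Multiset.card (Multiset.filter (fun a => c < hM.eigenvalues a) univ.val) :=
            Multiset.countP_map _ _ _
        _ = (univ.filter fun i => c < hM.eigenvalues i).card := by
            rw [Finset.card, Finset.filter_val]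
    omega
  have hfin : c ≤ 1 - (m : ℝ) ^ 2 * δ ^ 2 / 8 := by
    have h0 : 0 ≤ (m : ℝ) * δ := by positivity
    nlinarith
  exact hgetD.trans hfin
end
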